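/- arXiv:2408.14633 — 4 statements merged into one kernel-verified Lean document; each statement's English description precedes it below -/
import Mathlib

section
/- If G is 1-extendable and M is a module of G, then for every maximum independent set I of G with I ∩ M nonempty, the set I ∩ M is a maximum independent set of G[M]. -/
open scoped Classical

variable {V : Type*}

/-- `S` is an independent set of the graph `G`. -/
def IndepF (G : SimpleGraph V) (S : Finset V) : Prop :=
  ∀ u ∈ S, ∀ v ∈ S, ¬ G.Adj u v

/-- The independence number of `G`. -/
noncomputable def alphaN [Fintype V] (G : SimpleGraph V) : ℕ :=
  Finset.univ.powerset.sup fun S => if IndepF G S then S.card else 0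

/-- `G` is 1-extendable: every vertex belongs to a maximum independent set. -/
def OneExt [Fintype V] (G : SimpleGraph V) : Prop :=
  ∀ v : V, ∃ S : Finset V, v ∈ S ∧ IndepF G S ∧ S.card = alphaN G

/-- The 1-extendable chromatic number of `G`. -/
noncomputable def chiOneExt [Fintype V] (G : SimpleGraph V) : ℕ :=
  sInf {k | ∃ c : V → Fin k, ∀ i : Fin k, OneExt (G.induce {v | c v = i})}

/-- The join (complete sum) of two graphs. -/
def gJoin {α β : Type*} (G : SimpleGraph α) (H : SimpleGraph β) : SimpleGraph (α ⊕ β) where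
  Adj u v := match u, v with
    | Sum.inl u, Sum.inl v => G.Adj u v
    | Sum.inr u, Sum.inr v => H.Adj u v
    | Sum.inl _, Sum.inr _ => True
    | Sum.inr _, Sum.inl _ => True
  symm := by constructor; rintro (u|u) (v|v) h <;> simp_all [SimpleGraph.adj_comm]
  loopless := by constructor; rintro (u|u) h <;> simp_all

/-- `M` is a module of `G`. -/
def IsModule (G : SimpleGraph V) (M : Set V) : Prop :=
  ∀ v ∉ M, (∀ m ∈ M, G.Adj v m) ∨ (∀ m ∈ M, ¬ G.Adj v m)

/-- If  is 1-extendable,  a module, and  a maximum independent set of 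
meeting , then  is a maximum independent set of . -/
theorem inter_module_maxIndep [Fintype V] (G : SimpleGraph V) (hG : OneExt G)
    (M : Finset V) (hM : IsModule G ↑M)
    (I : Finset V) (hI : IndepF G I) (hImax : I.card = alphaN G)
    (hne : (I ∩ M).Nonempty) :
    IndepF G (I ∩ M) ∧ ∀ T : Finset V, T ⊆ M → IndepF G T → T.card ≤ (I ∩ M).card := by
  constructor
  · intro u hu v hv
    exact hI u (Finset.mem_of_mem_inter_left hu) v (Finset.mem_of_mem_inter_left hv)
  · intro T hTM hT
    by_contra hlt
    push_neg at hlt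
    set J := (I \ M) ∪ T with hJ
    have hdisj : Disjoint (I \ M) T := by
      apply Finset.disjoint_left.mpr
      intro a ha haT
      exact (Finset.mem_sdiff.mp ha).2 (hTM haT)
    obtain ⟨m0, hm0⟩ := hne
    have hm0I := Finset.mem_of_mem_inter_left hm0
    have hm0M := Finset.mem_of_mem_inter_right hm0
    have hcross : ∀ v ∈ I \ M, ∀ t ∈ M, ¬ G.Adj v t := by
      intro v hv t ht
      have hvM : (v : V) ∉ (M : Set V) := by
        simpa using (Finset.mem_sdiff.mp hv).2
      rcases hM v hvM with h | h
      · exact absurd (h m0 (by simpa using hm0M)) (hI v (Finset.mem_sdiff.mp hv).1 m0 hm0I)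
      · exact fun hadj => h t (by simpa using ht) hadj
    have hJind : IndepF G J := by
      intro u hu v hv
      rcases Finset.mem_union.mp hu with hu | hu <;> rcases Finset.mem_union.mp hv with hv | hv
      · exact hI u (Finset.mem_sdiff.mp hu).1 v (Finset.mem_sdiff.mp hv).1
      · exact hcross u hu v (hTM hv)
      · intro h; exact hcross v hv u (hTM hu) h.symm
      · exact hT u hu v hv
    have hJcard : J.card = (I \ M).card + T.card := Finset.card_union_of_disjoint hdisj
    have hIcard : (I ∩ M).card + (I \ M).card = I.card := Finset.card_inter_add_card_sdiff I M
    have hle : J.card ≤ alphaN G := by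
      have := Finset.le_sup (f := fun S => if IndepF G S then S.card else 0)
        (Finset.mem_powerset.mpr (Finset.subset_univ J))
      simpa [hJind, alphaN] using this
    omega
end

section
/- For every graph G, the 1-extendable chromatic number of G is at most α(G). -/
open scoped Classical

variable {V : Type*}

section Aux

variable [Fintype V] (G : SimpleGraph V)

/-- Independence number of the induced subgraph on a finite vertex set `T`. -/
noncomputable def alphaOn (T : Finset V) : ℕ :=
  T.powerset.sup fun S => if IndepF G S then S.card else 0

lemma alphaN_eq_alphaOn_univ : alphaN G = alphaOn G Finset.univ := rfl

lemma card_le_alphaOn {T S : Finset V} (hST : S ⊆ T) (hS : IndepF G S) :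
    S.card ≤ alphaOn G T := by
  have := Finset.le_sup (f := fun S => if IndepF G S then S.card else 0)
    (Finset.mem_powerset.mpr hST)
  simpa [hS, alphaOn] using this

lemma exists_alphaOn (T : Finset V) :
    ∃ S : Finset V, S ⊆ T ∧ IndepF G S ∧ S.card = alphaOn G T := by
  obtain ⟨S, hS, hval⟩ := Finset.exists_mem_eq_sup T.powerset
    ⟨∅, Finset.mem_powerset.mpr (Finset.empty_subset T)⟩
    (fun S => if IndepF G S then S.card else 0)
  by_cases h : IndepF G S
  · exact ⟨S, Finset.mem_powerset.mp hS, h, by simp [alphaOn, hval, h]⟩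
  · refine ⟨∅, Finset.empty_subset T, by intro u hu; simp at hu, ?_⟩
    simp [alphaOn, hval, h]

lemma alphaOn_mono {T T' : Finset V} (h : T ⊆ T') : alphaOn G T ≤ alphaOn G T' := by
  obtain ⟨S, hST, hS, hcard⟩ := exists_alphaOn G T
  calc alphaOn G T = S.card := hcard.symm
    _ ≤ alphaOn G T' := card_le_alphaOn G (hST.trans h) hS

lemma one_le_alphaOn {T : Finset V} (h : T.Nonempty) : 1 ≤ alphaOn G T := by
  obtain ⟨v, hv⟩ := h
  have := card_le_alphaOn G (S := {v}) (by simpa using hv)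
    (by intro u hu w hw; simp at hu hw; subst hu; subst hw; simp)
  simpa using this

set_option linter.unusedSectionVars false

/-- The set of vertices of `T` lying in some maximum independent set of the
induced subgraph on `T`. -/
noncomputable def XT (T : Finset V) : Finset V :=
  T.filter fun v => ∃ S : Finset V, S ⊆ T ∧ v ∈ S ∧ IndepF G S ∧ S.card = alphaOn G T

lemma maxset_subset_XT {T S : Finset V} (hST : S ⊆ T) (hS : IndepF G S)
    (hcard : S.card = alphaOn G T) : S ⊆ XT G T := by
  intro v hv
  exact Finset.mem_filter.mpr ⟨hST hv, S, hST, hv, hS, hcard⟩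

lemma alphaOn_sdiff_lt {T : Finset V} (h : T.Nonempty) :
    alphaOn G (T \ XT G T) < alphaOn G T := by
  rcases lt_or_eq_of_le (alphaOn_mono G (Finset.sdiff_subset : T \ XT G T ⊆ T)) with hlt | heq
  · exact hlt
  · exfalso
    obtain ⟨S, hST, hS, hcard⟩ := exists_alphaOn G (T \ XT G T)
    rw [heq] at hcard
    have hSX : S ⊆ XT G T := maxset_subset_XT G (hST.trans Finset.sdiff_subset) hS hcard
    have hpos : 0 < S.card := by
      rw [hcard]; exact one_le_alphaOn G h
    obtain ⟨v, hv⟩ := Finset.card_pos.mp hpos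
    exact (Finset.mem_sdiff.mp (hST hv)).2 (hSX hv)

/-- The sequence of remaining vertex sets. -/
noncomputable def Tseq : ℕ → Finset V
  | 0 => Finset.univ
  | k + 1 => Tseq k \ XT G (Tseq k)

lemma alphaOn_Tseq (k : ℕ) :
    alphaOn G (Tseq G k) + k ≤ alphaN G ∨ Tseq G k = ∅ := by
  induction k with
  | zero => left; simp only [Nat.add_zero]; rw [show Tseq G 0 = Finset.univ from rfl, alphaN_eq_alphaOn_univ]
  | succ k ih =>
    rcases ih with ih | ih
    · by_cases hk : Tseq G k = ∅
      · right; simp [Tseq, hk]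
      · left
        have := alphaOn_sdiff_lt G (Finset.nonempty_iff_ne_empty.mpr hk)
        have : alphaOn G (Tseq G (k + 1)) < alphaOn G (Tseq G k) := this
        omega
    · right; simp [Tseq, ih]

lemma Tseq_alphaN_empty : Tseq G (alphaN G) = ∅ := by
  rcases alphaOn_Tseq G (alphaN G) with h | h
  · by_contra hne
    have h1 := one_le_alphaOn G (Finset.nonempty_iff_ne_empty.mpr hne)
    omega
  · exact h

lemma exK (v : V) : ∃ k, v ∉ Tseq G k :=
  ⟨alphaN G, by simp [Tseq_alphaN_empty]⟩

/-- The layer index of a vertex. -/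
noncomputable def cIdx (v : V) : ℕ := Nat.find (exK G v) - 1

lemma Tseq_subset_of_le {m n : ℕ} (h : m ≤ n) : Tseq G n ⊆ Tseq G m := by
  induction n with
  | zero => simpa using (Nat.le_zero.mp h) ▸ subset_rfl
  | succ n ih =>
    rcases Nat.lt_or_ge m (n+1) with h' | h'
    · exact (Finset.sdiff_subset : Tseq G (n+1) ⊆ Tseq G n).trans (ih (by omega))
    · have : m = n + 1 := by omega
      subst this; exact subset_rfl

lemma find_pos (v : V) : 1 ≤ Nat.find (exK G v) := by
  by_contra h
  push_neg at h
  have h0 : Nat.find (exK G v) = 0 := by omega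
  have := Nat.find_spec (exK G v)
  rw [h0] at this
  exact this (by rw [show Tseq G 0 = Finset.univ from rfl]; exact Finset.mem_univ v)

lemma cIdx_lt (v : V) : cIdx G v < alphaN G := by
  have h1 := find_pos G v
  have h2 : Nat.find (exK G v) ≤ alphaN G :=
    Nat.find_min' (exK G v) (by simp [Tseq_alphaN_empty])
  unfold cIdx; omega

lemma mem_XT_cIdx (v : V) : v ∈ XT G (Tseq G (cIdx G v)) := by
  have h1 := find_pos G v
  have hmem : v ∈ Tseq G (cIdx G v) := by
    by_contra h
    have := Nat.find_min' (exK G v) h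
    unfold cIdx at this
    omega
  have hnot : v ∉ Tseq G (cIdx G v + 1) := by
    have : cIdx G v + 1 = Nat.find (exK G v) := by unfold cIdx; omega
    rw [this]; exact Nat.find_spec (exK G v)
  rw [show Tseq G (cIdx G v + 1) = Tseq G (cIdx G v) \ XT G (Tseq G (cIdx G v)) from rfl] at hnot
  by_contra hX
  exact hnot (Finset.mem_sdiff.mpr ⟨hmem, hX⟩)

lemma cIdx_unique {v : V} {j : ℕ} (h : v ∈ XT G (Tseq G j)) : cIdx G v = j := by
  have hmemT : v ∈ Tseq G j := Finset.mem_filter.mp h |>.1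
  have hnot : v ∉ Tseq G (j + 1) := by
    rw [show Tseq G (j + 1) = Tseq G j \ XT G (Tseq G j) from rfl]
    simp [Finset.mem_sdiff, h, hmemT]
  have h1 : Nat.find (exK G v) ≤ j + 1 := Nat.find_min' (exK G v) hnot
  have h2 : j < Nat.find (exK G v) := by
    by_contra hc
    push_neg at hc
    exact Nat.find_spec (exK G v) (Tseq_subset_of_le G hc hmemT)
  unfold cIdx; omega

end Aux

section Main
variable [Fintype V] (G : SimpleGraph V)
set_option linter.unusedSectionVars false

lemma card_le_alphaN {W : Type*} [Fintype W] (H : SimpleGraph W) {S : Finset W}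
    (hS : IndepF H S) : S.card ≤ alphaN H :=
  card_le_alphaOn H (Finset.subset_univ S) hS

lemma exists_alphaN {W : Type*} [Fintype W] (H : SimpleGraph W) :
    ∃ S : Finset W, IndepF H S ∧ S.card = alphaN H := by
  obtain ⟨S, _, hS, hcard⟩ := exists_alphaOn H Finset.univ
  exact ⟨S, hS, hcard⟩

lemma oneExt_induce (T : Finset V) (A : Set V) [Fintype ↥A]
    (hA : ∀ v, v ∈ A ↔ v ∈ XT G T) : OneExt (G.induce A) := by
  intro v
  have hvX : (v : V) ∈ XT G T := (hA v).mp v.2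
  obtain ⟨hvT, S, hST, hvS, hS, hcard⟩ := Finset.mem_filter.mp hvX
  have hSX : S ⊆ XT G T := maxset_subset_XT G hST hS hcard
  have hSA : ∀ x ∈ S, x ∈ A := fun x hx => (hA x).mpr (hSX hx)
  let f : {x // x ∈ S} → ↥A := fun x => ⟨x.1, hSA x.1 x.2⟩
  have hfinj : Function.Injective f := by
    intro a b hab
    apply Subtype.ext
    exact congrArg (Subtype.val : ↥A → V) hab
  set S' : Finset ↥A := S.attach.image f with hS'def
  have hcard' : S'.card = S.card := by
    rw [hS'def, Finset.card_image_of_injective _ hfinj, Finset.card_attach]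
  have hS' : IndepF (G.induce A) S' := by
    intro a ha b hb hadj
    simp only [hS'def, Finset.mem_image, Finset.mem_attach, true_and] at ha hb
    obtain ⟨⟨a', ha'⟩, rfl⟩ := ha
    obtain ⟨⟨b', hb'⟩, rfl⟩ := hb
    exact hS a' ha' b' hb' hadj
  have hle1 : S'.card ≤ alphaN (G.induce A) := card_le_alphaN _ hS'
  have hle2 : alphaN (G.induce A) ≤ S.card := by
    obtain ⟨R, hR, hRcard⟩ := exists_alphaN (G.induce A)
    have himg : (R.image (Subtype.val : ↥A → V)) ⊆ T := by
      intro x hx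
      simp only [Finset.mem_image] at hx
      obtain ⟨a, _, rfl⟩ := hx
      exact Finset.mem_filter.mp ((hA a).mp a.2) |>.1
    have hindep : IndepF G (R.image Subtype.val) := by
      intro x hx y hy hadj
      simp only [Finset.mem_image] at hx hy
      obtain ⟨a, ha, rfl⟩ := hx
      obtain ⟨b, hb, rfl⟩ := hy
      exact hR a ha b hb hadj
    have := card_le_alphaOn G himg hindep
    rw [Finset.card_image_of_injective _ Subtype.val_injective, hRcard] at this
    omega
  refine ⟨S', ?_, hS', by omega⟩
  rw [hS'def]
  exact Finset.mem_image.mpr ⟨⟨(v : V), hvS⟩, Finset.mem_attach _ _, rfl⟩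

end Main

/-- The 1-extendable chromatic number is at most the independence number. -/
theorem chiOneExt_le_alphaN [Fintype V] (G : SimpleGraph V) :
    chiOneExt G ≤ alphaN G := by
  apply Nat.sInf_le
  refine ⟨fun v => ⟨cIdx G v, cIdx_lt G v⟩, fun i => ?_⟩
  apply oneExt_induce G (Tseq G (i : ℕ))
  intro v
  constructor
  · intro hv
    have : cIdx G v = (i : ℕ) := congrArg Fin.val hv
    rw [← this]
    exact mem_XT_cIdx G v
  · intro hv
    exact Fin.ext (cIdx_unique G hv)
end

section
/- For every graph G with n ≥ 1 vertices, the 1-extendable chromatic number of G is at most 2√n. -/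
open scoped Classical

variable {V : Type*}

section Aux

-- relative independence number
noncomputable def alphaA (G : SimpleGraph V) (A : Finset V) : ℕ :=
  A.powerset.sup fun S => if IndepF G S then S.card else 0

lemma indepF_empty (G : SimpleGraph V) : IndepF G ∅ := by
  intro u hu; simp at hu

lemma card_le_alphaA {G : SimpleGraph V} {A S : Finset V} (hS : S ⊆ A) (h : IndepF G S) :
    S.card ≤ alphaA G A := by
  have := Finset.le_sup (f := fun S => if IndepF G S then S.card else 0)
    (Finset.mem_powerset.2 hS)
  simp only [h, if_true] at this; exact this

lemma exists_max_indep (G : SimpleGraph V) (A : Finset V) :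
    ∃ S, S ⊆ A ∧ IndepF G S ∧ S.card = alphaA G A := by
  obtain ⟨S, hS, hsup⟩ := Finset.exists_mem_eq_sup A.powerset
    ⟨∅, Finset.empty_mem_powerset A⟩ (fun S => if IndepF G S then S.card else 0)
  by_cases h : IndepF G S
  · exact ⟨S, Finset.mem_powerset.1 hS, h, by rw [alphaA, hsup, if_pos h]⟩
  · refine ⟨∅, Finset.empty_subset A, indepF_empty G, ?_⟩
    rw [alphaA, hsup, if_neg h]; simp

lemma one_le_alphaA {G : SimpleGraph V} {A : Finset V} (hA : A.Nonempty) :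
    1 ≤ alphaA G A := by
  obtain ⟨v, hv⟩ := hA
  have : ({v} : Finset V).card ≤ alphaA G A := by
    refine card_le_alphaA (by simpa) ?_
    intro a ha b hb
    simp only [Finset.mem_singleton] at ha hb
    subst ha; subst hb; simp
  simpa using this

lemma alphaA_mono {G : SimpleGraph V} {A B : Finset V} (h : A ⊆ B) :
    alphaA G A ≤ alphaA G B := by
  apply Finset.sup_le
  intro S hS
  by_cases hi : IndepF G S
  · rw [if_pos hi]
    exact card_le_alphaA ((Finset.mem_powerset.1 hS).trans h) hi
  · rw [if_neg hi]; exact Nat.zero_le _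

noncomputable def WA (G : SimpleGraph V) (A : Finset V) : Finset V :=
  A.filter fun v => ∃ S, S ⊆ A ∧ v ∈ S ∧ IndepF G S ∧ S.card = alphaA G A

lemma WA_subset (G : SimpleGraph V) (A : Finset V) : WA G A ⊆ A :=
  Finset.filter_subset _ _

lemma subset_WA {G : SimpleGraph V} {A S : Finset V} (hS : S ⊆ A) (hi : IndepF G S)
    (hc : S.card = alphaA G A) : S ⊆ WA G A := by
  intro v hv
  exact Finset.mem_filter.2 ⟨hS hv, S, hS, hv, hi, hc⟩

lemma WA_nonempty {G : SimpleGraph V} {A : Finset V} (hA : A.Nonempty) :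
    (WA G A).Nonempty := by
  obtain ⟨S, hS, hi, hc⟩ := exists_max_indep G A
  have hcard : 1 ≤ S.card := hc ▸ one_le_alphaA hA
  obtain ⟨v, hv⟩ := Finset.card_pos.1 hcard
  exact ⟨v, subset_WA hS hi hc hv⟩

lemma alphaA_sdiff_lt {G : SimpleGraph V} {A : Finset V} (hA : A.Nonempty) :
    alphaA G (A \ WA G A) < alphaA G A := by
  rcases Nat.lt_or_ge (alphaA G (A \ WA G A)) (alphaA G A) with h | h
  · exact h
  exfalso
  obtain ⟨S, hS, hi, hc⟩ := exists_max_indep G (A \ WA G A)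
  have hle : alphaA G (A \ WA G A) ≤ alphaA G A := alphaA_mono (Finset.sdiff_subset)
  have heq : alphaA G (A \ WA G A) = alphaA G A := le_antisymm hle h
  have hSA : S ⊆ A := hS.trans Finset.sdiff_subset
  have hSW : S ⊆ WA G A := subset_WA hSA hi (hc.trans heq)
  have h1 : 1 ≤ S.card := by rw [hc, heq]; exact one_le_alphaA hA
  obtain ⟨v, hv⟩ := Finset.card_pos.1 h1
  exact (Finset.mem_sdiff.1 (hS hv)).2 (hSW hv)

lemma card_sdiff_WA {G : SimpleGraph V} {A : Finset V} :
    (A \ WA G A).card + alphaA G A ≤ A.card := by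
  obtain ⟨S, hS, hi, hc⟩ := exists_max_indep G A
  have h1 : alphaA G A ≤ (WA G A).card := hc ▸ Finset.card_le_card (subset_WA hS hi hc)
  have h2 := Finset.card_sdiff_add_card_eq_card (WA_subset G A)
  omega

-- transfer to induced subgraphs
lemma alphaN_induce (G : SimpleGraph V) (B : Finset V) :
    alphaN (G.induce (↑B : Set V)) = alphaA G B := by
  apply le_antisymm
  · apply Finset.sup_le
    intro T _
    by_cases hi : IndepF (G.induce (↑B : Set V)) T
    · rw [if_pos hi]
      set T' : Finset V := T.map ⟨Subtype.val, Subtype.val_injective⟩ with hT'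
      have hsub : T' ⊆ B := by
        intro v hv
        simp only [hT', Finset.mem_map, Function.Embedding.coeFn_mk] at hv
        obtain ⟨a, _, rfl⟩ := hv
        exact a.2
      have hind : IndepF G T' := by
        intro u hu v hv
        simp only [hT', Finset.mem_map, Function.Embedding.coeFn_mk] at hu hv
        obtain ⟨a, ha, rfl⟩ := hu
        obtain ⟨b, hb, rfl⟩ := hv
        exact hi a ha b hb
      calc T.card = T'.card := (Finset.card_map _).symm
        _ ≤ alphaA G B := card_le_alphaA hsub hind
    · rw [if_neg hi]; exact Nat.zero_le _
  · obtain ⟨S, hS, hi, hc⟩ := exists_max_indep G B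
    set T : Finset (↑B : Set V) := S.subtype _ with hT
    have hind : IndepF (G.induce (↑B : Set V)) T := by
      intro u hu v hv
      rw [hT, Finset.mem_subtype] at hu hv
      exact hi u hu v hv
    have hcard : T.card = S.card := by
      rw [hT, Finset.card_subtype, Finset.filter_true_of_mem]
      intro x hx; exact hS hx
    have := Finset.le_sup (f := fun T => if IndepF (G.induce (↑B : Set V)) T then T.card else 0)
      (Finset.mem_powerset.2 (Finset.subset_univ T))
    simp only [if_pos hind] at this
    rw [hcard, hc] at this
    exact this

lemma alphaA_WA {G : SimpleGraph V} {A : Finset V} :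
    alphaA G (WA G A) = alphaA G A := by
  apply le_antisymm (alphaA_mono (WA_subset G A))
  obtain ⟨S, hS, hi, hc⟩ := exists_max_indep G A
  exact hc ▸ card_le_alphaA (subset_WA hS hi hc) hi

lemma oneExt_WA (G : SimpleGraph V) (A : Finset V) :
    OneExt (G.induce (↑(WA G A) : Set V)) := by
  intro v
  have hv : (v : V) ∈ WA G A := v.2
  obtain ⟨hvA, S, hS, hvS, hi, hc⟩ := Finset.mem_filter.1 hv
  have hSW : S ⊆ WA G A := subset_WA hS hi hc
  refine ⟨S.subtype _, ?_, ?_, ?_⟩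
  · rw [Finset.mem_subtype]; exact hvS
  · intro a ha b hb
    rw [Finset.mem_subtype] at ha hb
    exact hi a ha b hb
  · rw [Finset.card_subtype, Finset.filter_true_of_mem (fun x hx => Finset.mem_coe.mpr (hSW hx)),
      alphaN_induce, alphaA_WA, hc]

-- the coloring
noncomputable def colA (G : SimpleGraph V) (A : Finset V) (v : V) : ℕ :=
  if h : (WA G A).Nonempty then
    (if v ∈ WA G A then 0 else colA G (A \ WA G A) v + 1)
  else 0
termination_by A.card
decreasing_by
  exact Finset.card_lt_card (Finset.sdiff_ssubset (WA_subset G A) h)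

noncomputable def remA (G : SimpleGraph V) : ℕ → Finset V → Finset V
  | 0, A => A
  | (i+1), A => remA G i (A \ WA G A)

lemma WA_empty (G : SimpleGraph V) : WA G (∅ : Finset V) = ∅ := by
  apply Finset.subset_empty.1 (WA_subset G ∅)

lemma remA_subset (G : SimpleGraph V) (i : ℕ) (A : Finset V) : remA G i A ⊆ A := by
  induction i generalizing A with
  | zero => exact subset_rfl
  | succ n ih => exact (ih _).trans Finset.sdiff_subset

lemma colA_class (G : SimpleGraph V) (i : ℕ) (A : Finset V) (v : V) :
    (v ∈ A ∧ colA G A v = i) ↔ v ∈ WA G (remA G i A) := by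
  induction i generalizing A with
  | zero =>
    rw [remA]
    constructor
    · rintro ⟨hvA, hc⟩
      have hne : (WA G A).Nonempty := WA_nonempty ⟨v, hvA⟩
      rw [colA, dif_pos hne] at hc
      by_contra hW
      rw [if_neg hW] at hc
      omega
    · intro hW
      have hvA := WA_subset G A hW
      refine ⟨hvA, ?_⟩
      rw [colA, dif_pos (WA_nonempty ⟨v, hvA⟩), if_pos hW]
  | succ n ih =>
    rw [remA, ← ih]
    constructor
    · rintro ⟨hvA, hc⟩
      have hne : (WA G A).Nonempty := WA_nonempty ⟨v, hvA⟩
      rw [colA, dif_pos hne] at hc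
      by_cases hW : v ∈ WA G A
      · rw [if_pos hW] at hc; omega
      · rw [if_neg hW] at hc
        exact ⟨Finset.mem_sdiff.2 ⟨hvA, hW⟩, by omega⟩
    · rintro ⟨hvAW, hc⟩
      obtain ⟨hvA, hW⟩ := Finset.mem_sdiff.1 hvAW
      refine ⟨hvA, ?_⟩
      rw [colA, dif_pos (WA_nonempty ⟨v, hvA⟩), if_neg hW, hc]

lemma colA_bound (G : SimpleGraph V) (A : Finset V) (s : ℕ) (hs : 1 ≤ s)
    (v : V) (hv : v ∈ A) :
    colA G A v + 1 ≤ A.card / s + min (alphaA G A) (s - 1) := by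
  have hA : A.Nonempty := ⟨v, hv⟩
  have hne : (WA G A).Nonempty := WA_nonempty hA
  have ha1 : 1 ≤ alphaA G A := one_le_alphaA hA
  rw [colA, dif_pos hne]
  by_cases hW : v ∈ WA G A
  · rw [if_pos hW]
    rcases Nat.lt_or_ge s 2 with h2 | h2
    · interval_cases s
      have h1 : 1 ≤ A.card := Finset.card_pos.2 hA
      simpa using h1
    · have h1 : 1 ≤ min (alphaA G A) (s - 1) := le_min ha1 (by omega)
      calc 0 + 1 ≤ min (alphaA G A) (s - 1) := h1
        _ ≤ A.card / s + min (alphaA G A) (s - 1) := Nat.le_add_left _ _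
  · rw [if_neg hW]
    have hv' : v ∈ A \ WA G A := Finset.mem_sdiff.2 ⟨hv, hW⟩
    have IH := colA_bound G (A \ WA G A) s hs v hv'
    have halt := alphaA_sdiff_lt (G := G) hA
    have hcard := card_sdiff_WA (G := G) (A := A)
    rcases Nat.lt_or_ge (alphaA G A) s with hcase | hcase
    · -- α ≤ s - 1
      have hmin1 : min (alphaA G A) (s - 1) = alphaA G A := min_eq_left (by omega)
      have hdiv : (A \ WA G A).card / s ≤ A.card / s :=
        Nat.div_le_div_right (Finset.card_le_card Finset.sdiff_subset)
      have hm2 : min (alphaA G (A \ WA G A)) (s - 1) + 1 ≤ alphaA G A := by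
        have := min_le_left (alphaA G (A \ WA G A)) (s - 1)
        omega
      rw [hmin1]
      calc colA G (A \ WA G A) v + 1 + 1
          ≤ ((A \ WA G A).card / s + min (alphaA G (A \ WA G A)) (s - 1)) + 1 :=
            Nat.add_le_add_right IH 1
        _ = (A \ WA G A).card / s + (min (alphaA G (A \ WA G A)) (s - 1) + 1) := by ring
        _ ≤ A.card / s + alphaA G A := Nat.add_le_add hdiv hm2
    · -- α ≥ s
      have hmin1 : min (alphaA G A) (s - 1) = s - 1 := min_eq_right (by omega)
      have hsn : s ≤ A.card := by omega
      have hn' : (A \ WA G A).card ≤ A.card - s := by omega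
      have hdiv : (A \ WA G A).card / s ≤ (A.card - s) / s := Nat.div_le_div_right hn'
      have hkey : (A.card - s) / s + 1 = A.card / s := by
        have h := Nat.add_div_right (A.card - s) (by omega : 0 < s)
        rw [Nat.sub_add_cancel hsn] at h
        exact h.symm
      have hm2 : min (alphaA G (A \ WA G A)) (s - 1) ≤ s - 1 := min_le_right _ _
      rw [hmin1]
      calc colA G (A \ WA G A) v + 1 + 1
          ≤ ((A \ WA G A).card / s + min (alphaA G (A \ WA G A)) (s - 1)) + 1 :=
            Nat.add_le_add_right IH 1
        _ ≤ ((A.card - s) / s + (s - 1)) + 1 := by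
            exact Nat.add_le_add_right (Nat.add_le_add hdiv hm2) 1
        _ = ((A.card - s) / s + 1) + (s - 1) := by ring
        _ = A.card / s + (s - 1) := by rw [hkey]
termination_by A.card
decreasing_by
  exact Finset.card_lt_card (Finset.sdiff_ssubset (WA_subset G A) hne)

lemma oneExt_congr [Fintype V] {G : SimpleGraph V} {s t : Set V} (h : s = t)
    {i1 : Fintype ↥s} {i2 : Fintype ↥t}
    (ht : @OneExt _ i2 (G.induce t)) : @OneExt _ i1 (G.induce s) := by
  subst h
  cases Subsingleton.elim i1 i2
  exact ht

set_option maxHeartbeats 1000000 in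
theorem chiOneExt_le_two_sqrt' [Fintype V] (G : SimpleGraph V) (hn : 1 ≤ Fintype.card V) :
    (chiOneExt G : ℝ) ≤ 2 * Real.sqrt (Fintype.card V) := by
  set n := Fintype.card V with hndef
  set s : ℕ := ⌈Real.sqrt n⌉₊ with hsdef
  have hsqrt_pos : (0:ℝ) < Real.sqrt n := Real.sqrt_pos.2 (by exact_mod_cast hn)
  have hsqrt1 : (1:ℝ) ≤ Real.sqrt n := Real.one_le_sqrt.2 (by exact_mod_cast hn)
  have hs1 : 1 ≤ s := Nat.one_le_ceil_iff.2 hsqrt_pos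
  set k : ℕ := n / s + (s - 1) with hkdef
  -- step 1 : chiOneExt G ≤ k
  have hcol : ∀ v : V, colA G Finset.univ v < k := by
    intro v
    have h := colA_bound G Finset.univ s hs1 v (Finset.mem_univ v)
    have hmin : min (alphaA G Finset.univ) (s - 1) ≤ s - 1 := min_le_right _ _
    rw [Finset.card_univ, ← hndef] at h
    omega
  have hchi : chiOneExt G ≤ k := by
    apply Nat.sInf_le
    set c : V → Fin k := fun v => ⟨colA G Finset.univ v, hcol v⟩ with hc
    refine ⟨c, fun i => ?_⟩
    have hset : {v : V | c v = i}
        = (↑(WA G (remA G i.val Finset.univ)) : Set V) := by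
      ext v
      simp only [Set.mem_setOf_eq, hc, Fin.ext_iff, Finset.coe_sort_coe, Finset.mem_coe]
      rw [← colA_class]
      simp
    exact oneExt_congr hset (oneExt_WA G (remA G i.val Finset.univ))
  -- step 2 : (k : ℝ) ≤ 2 √n
  have h1 : ((n / s : ℕ) : ℝ) ≤ Real.sqrt n := by
    calc ((n / s : ℕ) : ℝ) ≤ (n : ℝ) / (s : ℝ) := Nat.cast_div_le
      _ ≤ (n : ℝ) / Real.sqrt n := by
          apply div_le_div_of_nonneg_left (by positivity) hsqrt_pos
          exact Nat.le_ceil _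
      _ = Real.sqrt n := Real.div_sqrt
  have h2 : ((s - 1 : ℕ) : ℝ) ≤ Real.sqrt n := by
    have hceil : (s : ℝ) < Real.sqrt n + 1 := Nat.ceil_lt_add_one hsqrt_pos.le
    have : ((s - 1 : ℕ) : ℝ) = (s : ℝ) - 1 := by
      rw [Nat.cast_sub hs1]; simp
    rw [this]; linarith
  calc (chiOneExt G : ℝ) ≤ (k : ℝ) := by exact_mod_cast hchi
    _ = ((n / s : ℕ) : ℝ) + ((s - 1 : ℕ) : ℝ) := by rw [hkdef]; push_cast; ring
    _ ≤ Real.sqrt n + Real.sqrt n := add_le_add h1 h2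
    _ = 2 * Real.sqrt n := by ring

end Aux

/-- For an `n`-vertex graph, the 1-extendable chromatic number is at most `2√n`. -/
theorem chiOneExt_le_two_sqrt [Fintype V] (G : SimpleGraph V) (hn : 1 ≤ Fintype.card V) :
    (chiOneExt G : ℝ) ≤ 2 * Real.sqrt (Fintype.card V) :=
  chiOneExt_le_two_sqrt' G hn
end

section
/- For every cograph G with at least one vertex, the 1-extendable chromatic number of G is at most log₂(α(G)) + 1. -/
open scoped Classical

variable {V : Type*}

/-- A cograph: a graph with no induced path on four vertices. -/
def IsCograph (G : SimpleGraph V) : Prop :=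
  ¬ ∃ f : Fin 4 ↪ V, G.Adj (f 0) (f 1) ∧ G.Adj (f 1) (f 2) ∧ G.Adj (f 2) (f 3) ∧
      ¬ G.Adj (f 0) (f 2) ∧ ¬ G.Adj (f 0) (f 3) ∧ ¬ G.Adj (f 1) (f 3)

namespace CGAux

noncomputable def alphaF (G : SimpleGraph V) (S : Finset V) : ℕ :=
  S.powerset.sup fun T => if IndepF G T then T.card else 0

def oneExtF (G : SimpleGraph V) (S : Finset V) : Prop :=
  ∀ v ∈ S, ∃ T, T ⊆ S ∧ v ∈ T ∧ IndepF G T ∧ T.card = alphaF G S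

variable {G : SimpleGraph V}

lemma indepF_mono {T T' : Finset V} (h : T ⊆ T') (hI : IndepF G T') : IndepF G T :=
  fun u hu v hv => hI u (h hu) v (h hv)

lemma indepF_empty : IndepF G ∅ := by intro u hu; simp at hu

lemma indepF_singleton (v : V) : IndepF G {v} := by
  intro a ha b hb
  simp only [Finset.mem_singleton] at ha hb
  subst ha; subst hb; exact G.irrefl

lemma card_le_alphaF {T S : Finset V} (hTS : T ⊆ S) (hI : IndepF G T) :
    T.card ≤ alphaF G S := by
  have h := Finset.le_sup (f := fun T => if IndepF G T then T.card else 0)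
    (Finset.mem_powerset.2 hTS)
  simp only [if_pos hI] at h
  exact h

lemma exists_alphaF (G : SimpleGraph V) (S : Finset V) :
    ∃ T, T ⊆ S ∧ IndepF G T ∧ T.card = alphaF G S := by
  obtain ⟨T, hT, hval⟩ := Finset.exists_mem_eq_sup S.powerset
    (Finset.powerset_nonempty S) (fun T => if IndepF G T then T.card else 0)
  rw [Finset.mem_powerset] at hT
  by_cases hI : IndepF G T
  · refine ⟨T, hT, hI, ?_⟩
    show T.card = S.powerset.sup fun T => if IndepF G T then T.card else 0
    rw [hval, if_pos hI]
  · refine ⟨∅, Finset.empty_subset S, indepF_empty, ?_⟩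
    show (∅ : Finset V).card = S.powerset.sup fun T => if IndepF G T then T.card else 0
    rw [hval, if_neg hI]; simp

lemma alphaF_mono {S S' : Finset V} (h : S ⊆ S') : alphaF G S ≤ alphaF G S' := by
  obtain ⟨T, hT, hI, hc⟩ := exists_alphaF G S
  rw [← hc]; exact card_le_alphaF (hT.trans h) hI

lemma alphaF_empty : alphaF G (∅ : Finset V) = 0 := by
  obtain ⟨T, hT, hI, hc⟩ := exists_alphaF G (∅ : Finset V)
  rw [← hc]; simp [Finset.subset_empty.mp hT]

lemma alphaF_le_card (S : Finset V) : alphaF G S ≤ S.card := by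
  obtain ⟨T, hT, hI, hc⟩ := exists_alphaF G S
  rw [← hc]; exact Finset.card_le_card hT

lemma one_le_alphaF {S : Finset V} (h : S.Nonempty) : 1 ≤ alphaF G S := by
  obtain ⟨v, hv⟩ := h
  have := card_le_alphaF (G := G) (Finset.singleton_subset_iff.2 hv) (indepF_singleton v)
  simpa using this

lemma alphaF_singleton (v : V) : alphaF G ({v} : Finset V) = 1 :=
  le_antisymm (by simpa using alphaF_le_card ({v} : Finset V))
    (one_le_alphaF ⟨v, Finset.mem_singleton_self v⟩)

lemma oneExtF_empty : oneExtF G ∅ := by intro v hv; simp at hv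

lemma oneExtF_singleton (v : V) : oneExtF G {v} := by
  intro a ha
  exact ⟨{v}, le_refl _, ha, indepF_singleton v, by simp [alphaF_singleton]⟩

end CGAux

namespace CGAux

variable {G : SimpleGraph V}

/-- no edges between `A` and `B`. -/
def NoCross (G : SimpleGraph V) (A B : Finset V) : Prop := ∀ a ∈ A, ∀ b ∈ B, ¬ G.Adj a b

/-- all edges between `A` and `B`. -/
def AllCross (G : SimpleGraph V) (A B : Finset V) : Prop := ∀ a ∈ A, ∀ b ∈ B, G.Adj a b

lemma noCross_mono {A B A' B' : Finset V} (hA : A' ⊆ A) (hB : B' ⊆ B)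
    (h : NoCross G A B) : NoCross G A' B' := fun a ha b hb => h a (hA ha) b (hB hb)

lemma allCross_mono {A B A' B' : Finset V} (hA : A' ⊆ A) (hB : B' ⊆ B)
    (h : AllCross G A B) : AllCross G A' B' := fun a ha b hb => h a (hA ha) b (hB hb)

lemma indepF_union {A B TA TB : Finset V} (hTA : TA ⊆ A) (hTB : TB ⊆ B)
    (hx : NoCross G A B) (hIA : IndepF G TA) (hIB : IndepF G TB) :
    IndepF G (TA ∪ TB) := by
  intro u hu v hv
  rcases Finset.mem_union.mp hu with hu | hu <;> rcases Finset.mem_union.mp hv with hv | hv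
  · exact hIA u hu v hv
  · exact hx u (hTA hu) v (hTB hv)
  · intro hadj; exact hx v (hTA hv) u (hTB hu) hadj.symm
  · exact hIB u hu v hv

lemma alphaF_union_noCross {A B : Finset V} (hd : Disjoint A B) (hx : NoCross G A B) :
    alphaF G (A ∪ B) = alphaF G A + alphaF G B := by
  apply le_antisymm
  · obtain ⟨T, hT, hI, hc⟩ := exists_alphaF G (A ∪ B)
    rw [← hc]
    have h1 : T ∩ A ∪ T ∩ B = T := by
      rw [← Finset.inter_union_distrib_left]
      exact Finset.inter_eq_left.mpr hT
    have hdj : Disjoint (T ∩ A) (T ∩ B) :=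
      hd.mono Finset.inter_subset_right Finset.inter_subset_right
    have h2 : T.card = (T ∩ A).card + (T ∩ B).card := by
      rw [← Finset.card_union_of_disjoint hdj, h1]
    rw [h2]
    exact Nat.add_le_add
      (card_le_alphaF Finset.inter_subset_right (indepF_mono Finset.inter_subset_left hI))
      (card_le_alphaF Finset.inter_subset_right (indepF_mono Finset.inter_subset_left hI))
  · obtain ⟨TA, hTA, hIA, hcA⟩ := exists_alphaF G A
    obtain ⟨TB, hTB, hIB, hcB⟩ := exists_alphaF G B
    rw [← hcA, ← hcB, ← Finset.card_union_of_disjoint (hd.mono hTA hTB)]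
    exact card_le_alphaF (Finset.union_subset_union hTA hTB)
      (indepF_union hTA hTB hx hIA hIB)

lemma oneExtF_union_noCross {A B : Finset V} (hd : Disjoint A B) (hx : NoCross G A B)
    (hA : oneExtF G A) (hB : oneExtF G B) : oneExtF G (A ∪ B) := by
  intro v hv
  rcases Finset.mem_union.mp hv with hv | hv
  · obtain ⟨T, hT, hvT, hI, hc⟩ := hA v hv
    obtain ⟨TB, hTB, hIB, hcB⟩ := exists_alphaF G B
    refine ⟨T ∪ TB, Finset.union_subset_union hT hTB, Finset.mem_union_left _ hvT,
      indepF_union hT hTB hx hI hIB, ?_⟩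
    rw [Finset.card_union_of_disjoint (hd.mono hT hTB), hc, hcB,
      alphaF_union_noCross hd hx]
  · obtain ⟨T, hT, hvT, hI, hc⟩ := hB v hv
    obtain ⟨TA, hTA, hIA, hcA⟩ := exists_alphaF G A
    refine ⟨TA ∪ T, Finset.union_subset_union hTA hT, Finset.mem_union_right _ hvT,
      indepF_union hTA hT hx hIA hI, ?_⟩
    rw [Finset.card_union_of_disjoint (hd.mono hTA hT), hc, hcA,
      alphaF_union_noCross hd hx]

lemma indep_subset_of_allCross {A B T : Finset V} (hd : Disjoint A B)
    (hx : AllCross G A B) (hT : T ⊆ A ∪ B) (hI : IndepF G T) :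
    T ⊆ A ∨ T ⊆ B := by
  by_cases hTA : T ⊆ A
  · exact Or.inl hTA
  · right
    obtain ⟨b, hbT, hbA⟩ := Finset.not_subset.mp hTA
    have hbB : b ∈ B := by
      rcases Finset.mem_union.mp (hT hbT) with h | h
      · exact absurd h hbA
      · exact h
    intro a haT
    rcases Finset.mem_union.mp (hT haT) with h | h
    · exact absurd (hx a h b hbB) (hI a haT b hbT)
    · exact h

lemma alphaF_union_allCross {A B : Finset V} (hd : Disjoint A B) (hx : AllCross G A B) :
    alphaF G (A ∪ B) = max (alphaF G A) (alphaF G B) := by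
  apply le_antisymm
  · obtain ⟨T, hT, hI, hc⟩ := exists_alphaF G (A ∪ B)
    rw [← hc]
    rcases indep_subset_of_allCross hd hx hT hI with h | h
    · exact le_max_of_le_left (card_le_alphaF h hI)
    · exact le_max_of_le_right (card_le_alphaF h hI)
  · exact max_le (alphaF_mono Finset.subset_union_left)
      (alphaF_mono Finset.subset_union_right)

lemma oneExtF_union_allCross {A B : Finset V} (hd : Disjoint A B) (hx : AllCross G A B)
    (hA : oneExtF G A) (hB : oneExtF G B) (he : alphaF G A = alphaF G B) :
    oneExtF G (A ∪ B) := by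
  have hm : alphaF G (A ∪ B) = alphaF G A := by
    rw [alphaF_union_allCross hd hx, ← he, max_self]
  intro v hv
  rcases Finset.mem_union.mp hv with hv | hv
  · obtain ⟨T, hT, hvT, hI, hc⟩ := hA v hv
    exact ⟨T, hT.trans Finset.subset_union_left, hvT, hI, by rw [hc, hm]⟩
  · obtain ⟨T, hT, hvT, hI, hc⟩ := hB v hv
    exact ⟨T, hT.trans Finset.subset_union_right, hvT, hI, by rw [hc, hm, he]⟩

end CGAux

namespace CGAux

variable {G : SimpleGraph V}

lemma mkP4 (hG : IsCograph G) {a b c d : V} (hab : G.Adj a b) (hbc : G.Adj b c)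
    (hcd : G.Adj c d) (hac : ¬ G.Adj a c) (had : ¬ G.Adj a d) (hbd : ¬ G.Adj b d)
    (hac' : a ≠ c) (had' : a ≠ d) (hbd' : b ≠ d) : False := by
  apply hG
  have hinj : Function.Injective (![a, b, c, d] : Fin 4 → V) := by
    intro i j hij
    fin_cases i <;> fin_cases j <;>
      first
      | rfl
      | (exfalso; simp only [Matrix.cons_val_zero, Matrix.cons_val_one, Matrix.head_cons,
          Matrix.cons_val_two, Matrix.tail_cons, Matrix.cons_val_three] at hij;
         first
         | exact hab.ne hij | exact hab.ne hij.symm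
         | exact hbc.ne hij | exact hbc.ne hij.symm
         | exact hcd.ne hij | exact hcd.ne hij.symm
         | exact hac' hij | exact hac' hij.symm
         | exact had' hij | exact had' hij.symm
         | exact hbd' hij | exact hbd' hij.symm)
  refine ⟨⟨![a, b, c, d], hinj⟩, ?_, ?_, ?_, ?_, ?_, ?_⟩ <;>
    simpa using (by assumption : _)

lemma isCograph_compl (hG : IsCograph G) : IsCograph Gᶜ := by
  rintro ⟨f, h01, h12, h23, h02, h03, h13⟩
  simp only [SimpleGraph.compl_adj, not_and, not_not, ne_eq] at h01 h12 h23 h02 h03 h13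
  have e02 : G.Adj (f 0) (f 2) := h02 (fun h => by simpa using f.injective h)
  have e03 : G.Adj (f 0) (f 3) := h03 (fun h => by simpa using f.injective h)
  have e13 : G.Adj (f 1) (f 3) := h13 (fun h => by simpa using f.injective h)
  -- induced path in G : f1 - f3 - f0 - f2
  exact mkP4 hG e13 e03.symm e02 (fun h => h01.2 h.symm) h12.2 (fun h => h23.2 h.symm)
    (fun h => by simpa using f.injective h) (fun h => by simpa using f.injective h)
    (fun h => by simpa using f.injective h)

/-- The induction step: if `S'` splits into two joined halves, then `insert v S'`
splits as disjoint halves or joined halves. -/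
lemma seinsche_step (hG : IsCograph G) {v : V} {A B : Finset V} (hv : v ∉ A ∪ B)
    (hA : A.Nonempty) (hB : B.Nonempty) (hd : Disjoint A B) (hx : AllCross G A B) :
    (∃ X Y : Finset V, X.Nonempty ∧ Y.Nonempty ∧ Disjoint X Y ∧
      X ∪ Y = insert v (A ∪ B) ∧ NoCross G X Y) ∨
    (∃ X Y : Finset V, X.Nonempty ∧ Y.Nonempty ∧ Disjoint X Y ∧
      X ∪ Y = insert v (A ∪ B) ∧ AllCross G X Y) := by
  classical
  set S' := A ∪ B with hS'
  have hvA : v ∉ A := fun h => hv (Finset.mem_union_left _ h)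
  have hvB : v ∉ B := fun h => hv (Finset.mem_union_right _ h)
  by_cases h2 : ∀ w ∈ S', ¬ G.Adj v w
  · -- v isolated from S'
    left
    refine ⟨{v}, S', Finset.singleton_nonempty v, hA.mono Finset.subset_union_left,
      by simpa using hv, by rw [Finset.insert_eq], ?_⟩
    intro a ha b hb
    rw [Finset.mem_singleton] at ha; subst ha
    exact h2 b hb
  · -- v has a neighbour in S'
    push_neg at h2
    right
    set A' := A.filter (fun w => ¬ G.Adj v w) with hA'def
    set B' := B.filter (fun w => ¬ G.Adj v w) with hB'def
    by_cases hA' : A' = ∅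
    · -- v adjacent to all of A
      have hall : ∀ a ∈ A, G.Adj v a := by
        intro a ha
        by_contra hna
        exact (Finset.eq_empty_iff_forall_notMem.mp hA' a) (Finset.mem_filter.mpr ⟨ha, hna⟩)
      refine ⟨A, insert v B, hA, Finset.insert_nonempty v B, ?_, ?_, ?_⟩
      · rw [Finset.disjoint_insert_right]
        exact ⟨hvA, hd⟩
      · rw [Finset.union_insert, hS']
      · intro a ha b hb
        rcases Finset.mem_insert.mp hb with rfl | hb
        · exact (hall a ha).symm
        · exact hx a ha b hb
    · by_cases hB' : B' = ∅
      · have hall : ∀ b ∈ B, G.Adj v b := by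
          intro b hb
          by_contra hnb
          exact (Finset.eq_empty_iff_forall_notMem.mp hB' b) (Finset.mem_filter.mpr ⟨hb, hnb⟩)
        refine ⟨B, insert v A, hB, Finset.insert_nonempty v A, ?_, ?_, ?_⟩
        · rw [Finset.disjoint_insert_right]
          exact ⟨hvB, hd.symm⟩
        · rw [Finset.union_insert, hS', Finset.union_comm B A]
        · intro b hb a ha
          rcases Finset.mem_insert.mp ha with rfl | ha
          · exact (hall b hb).symm
          · exact (hx a ha b hb).symm
      · -- both A' and B' nonempty
        obtain ⟨a0, ha0⟩ := Finset.nonempty_of_ne_empty hA'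
        obtain ⟨b0, hb0⟩ := Finset.nonempty_of_ne_empty hB'
        have ha0A : a0 ∈ A := (Finset.mem_filter.mp ha0).1
        have ha0n : ¬ G.Adj v a0 := (Finset.mem_filter.mp ha0).2
        have hb0B : b0 ∈ B := (Finset.mem_filter.mp hb0).1
        have hb0n : ¬ G.Adj v b0 := (Finset.mem_filter.mp hb0).2
        set N := S'.filter (fun w => G.Adj v w) with hNdef
        obtain ⟨u0, hu0S, hu0adj⟩ := h2
        have hNne : N.Nonempty := ⟨u0, Finset.mem_filter.mpr ⟨hu0S, hu0adj⟩⟩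
        -- key claim: every vertex of N is adjacent to every non-neighbour of v in S'
        have key : ∀ u ∈ N, ∀ w ∈ A' ∪ B', G.Adj u w := by
          intro u hu w hw
          have huS : u ∈ S' := (Finset.mem_filter.mp hu).1
          have huadj : G.Adj v u := (Finset.mem_filter.mp hu).2
          rcases Finset.mem_union.mp huS with huA | huB
          · rcases Finset.mem_union.mp hw with hwA | hwB
            · -- u ∈ A, w ∈ A'
              have hwA2 : w ∈ A := (Finset.mem_filter.mp hwA).1
              have hwn : ¬ G.Adj v w := (Finset.mem_filter.mp hwA).2
              by_contra hna
              -- P4 : w - b0 - u - v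
              exact mkP4 hG (hx w hwA2 b0 hb0B) (hx u huA b0 hb0B).symm huadj.symm
                (fun h => hna h.symm) (fun h => hwn h.symm) (fun h => hb0n h.symm)
                (fun h => hwn (h ▸ huadj)) (fun h => hv (h ▸ (Finset.mem_union_left _ hwA2)))
                (fun h => hv (h ▸ (Finset.mem_union_right _ hb0B)))
            · have hwB2 : w ∈ B := (Finset.mem_filter.mp hwB).1
              exact hx u huA w hwB2
          · rcases Finset.mem_union.mp hw with hwA | hwB
            · have hwA2 : w ∈ A := (Finset.mem_filter.mp hwA).1
              exact (hx w hwA2 u huB).symm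
            · -- u ∈ B, w ∈ B'
              have hwB2 : w ∈ B := (Finset.mem_filter.mp hwB).1
              have hwn : ¬ G.Adj v w := (Finset.mem_filter.mp hwB).2
              by_contra hna
              -- P4 : w - a0 - u - v
              exact mkP4 hG (hx a0 ha0A w hwB2).symm (hx a0 ha0A u huB) huadj.symm
                (fun h => hna h.symm) (fun h => hwn h.symm) (fun h => ha0n h.symm)
                (fun h => hwn (h ▸ huadj)) (fun h => hv (h ▸ (Finset.mem_union_right _ hwB2)))
                (fun h => hv (h ▸ (Finset.mem_union_left _ ha0A)))
        have hsplit : N ∪ (A' ∪ B') = S' := by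
          have h1 : A' ∪ B' = S'.filter (fun w => ¬ G.Adj v w) := by
            rw [hA'def, hB'def, hS', Finset.filter_union]
          rw [h1, hNdef, Finset.filter_union_filter_not_eq]
        refine ⟨N, insert v (A' ∪ B'), hNne,
          Finset.insert_nonempty _ _, ?_, ?_, ?_⟩
        · rw [Finset.disjoint_insert_right]
          constructor
          · intro hvN
            exact hv ((Finset.mem_filter.mp hvN).1)
          · rw [Finset.disjoint_union_right]
            constructor
            · intro s hsN hsA' x hx2
              have h1 := (Finset.mem_filter.mp (hsN hx2)).2
              have h2 := (Finset.mem_filter.mp (hsA' hx2)).2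
              exact absurd h1 h2
            · intro s hsN hsB' x hx2
              have h1 := (Finset.mem_filter.mp (hsN hx2)).2
              have h2 := (Finset.mem_filter.mp (hsB' hx2)).2
              exact absurd h1 h2
        · rw [Finset.union_insert, hsplit]
        · intro u hu w hw
          rcases Finset.mem_insert.mp hw with rfl | hw
          · exact ((Finset.mem_filter.mp hu).2).symm
          · exact key u hu w hw

lemma seinsche (hG : IsCograph G) : ∀ n (S : Finset V), S.card = n → 2 ≤ S.card →
    (∃ X Y : Finset V, X.Nonempty ∧ Y.Nonempty ∧ Disjoint X Y ∧
      X ∪ Y = S ∧ NoCross G X Y) ∨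
    (∃ X Y : Finset V, X.Nonempty ∧ Y.Nonempty ∧ Disjoint X Y ∧
      X ∪ Y = S ∧ AllCross G X Y) := by
  intro n
  induction n using Nat.strong_induction_on with
  | _ n ih =>
    intro S hcard h2
    obtain ⟨v, hvS⟩ : S.Nonempty := Finset.card_pos.mp (by omega)
    set S' := S.erase v with hS'def
    have hS'card : S'.card = S.card - 1 := Finset.card_erase_of_mem hvS
    have hvS' : v ∉ S' := Finset.notMem_erase v S
    have hins : insert v S' = S := Finset.insert_erase hvS
    by_cases hsmall : S.card = 2
    · -- S = {v, w}
      obtain ⟨w, hw⟩ : ∃ w, S' = {w} := Finset.card_eq_one.mp (by omega)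
      have hwS' : w ∈ S' := hw ▸ Finset.mem_singleton_self w
      have hvw : v ≠ w := fun h => hvS' (h ▸ hwS')
      by_cases hadj : G.Adj v w
      · right
        refine ⟨{v}, {w}, Finset.singleton_nonempty v, Finset.singleton_nonempty w,
          Finset.disjoint_singleton.mpr hvw, by rw [← hins, hw]; rfl, ?_⟩
        intro a ha b hb
        rw [Finset.mem_singleton] at ha hb; subst ha; subst hb; exact hadj
      · left
        refine ⟨{v}, {w}, Finset.singleton_nonempty v, Finset.singleton_nonempty w,
          Finset.disjoint_singleton.mpr hvw, by rw [← hins, hw]; rfl, ?_⟩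
        intro a ha b hb
        rw [Finset.mem_singleton] at ha hb; subst ha; subst hb; exact hadj
    · -- S.card ≥ 3
      have h3 : 3 ≤ S.card := by omega
      have hrec := ih (S'.card) (by omega) S' rfl (by omega)
      rcases hrec with ⟨X, Y, hXne, hYne, hdXY, hXY, hnc⟩ | ⟨X, Y, hXne, hYne, hdXY, hXY, hac⟩
      · -- S' splits with no cross edges in G: i.e. all cross edges in Gᶜ
        have hacC : AllCross Gᶜ X Y := by
          intro a ha b hb
          rw [SimpleGraph.compl_adj]
          exact ⟨fun h => (Finset.disjoint_left.mp hdXY ha) (h ▸ hb), hnc a ha b hb⟩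
        have := seinsche_step (G := Gᶜ) (isCograph_compl hG) (v := v)
          (by rw [hXY]; exact hvS') hXne hYne hdXY hacC
        rw [hXY, hins] at this
        rcases this with ⟨X', Y', h1, h2', h3', h4, h5⟩ | ⟨X', Y', h1, h2', h3', h4, h5⟩
        · -- NoCross in Gᶜ = AllCross in G
          right
          refine ⟨X', Y', h1, h2', h3', h4, ?_⟩
          intro a ha b hb
          have hne : a ≠ b := fun h => (Finset.disjoint_left.mp h3' ha) (h ▸ hb)
          have := h5 a ha b hb
          rw [SimpleGraph.compl_adj] at this
          push_neg at this
          exact this hne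
        · -- AllCross in Gᶜ = NoCross in G
          left
          refine ⟨X', Y', h1, h2', h3', h4, ?_⟩
          intro a ha b hb
          have := h5 a ha b hb
          rw [SimpleGraph.compl_adj] at this
          exact this.2
      · have := seinsche_step hG (v := v) (by rw [hXY]; exact hvS') hXne hYne hdXY hac
        rw [hXY, hins] at this
        exact this

end CGAux

namespace CGAux

variable {G : SimpleGraph V}

lemma split_arith (a1 a2 s : ℕ) (h1 : 1 ≤ a1) (h2 : 1 ≤ a2) (hs : 1 ≤ s) (hsa : s ≤ a1 + a2) :
    ∃ s1 s2, s1 + s2 = s ∧ s1 ≤ a1 ∧ s2 ≤ a2 ∧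
    ((if s1 = 0 then a1 else max (a1 - s1) (s1 - 1)) +
      (if s2 = 0 then a2 else max (a2 - s2) (s2 - 1)) ≤ max (a1 + a2 - s) (s - 1)) := by
  by_cases hc : s ≤ (a1+1)/2 + (a2+1)/2
  · refine ⟨min s ((a1+1)/2), s - min s ((a1+1)/2), ?_, ?_, ?_, ?_⟩ <;> [omega; omega; omega; skip]
    split <;> split <;> omega
  · by_cases hc2 : a1/2 + 1 + (a2/2 + 1) ≤ s
    · refine ⟨max (a1/2+1) (s - a2), s - max (a1/2+1) (s - a2), ?_, ?_, ?_, ?_⟩ <;>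
        [omega; omega; omega; skip]
      split <;> split <;> omega
    · refine ⟨a1/2+1, s - (a1/2+1), ?_, ?_, ?_, ?_⟩ <;> [omega; omega; omega; skip]
      split <;> split <;> omega

lemma sdiff_union_helper {X Y C1 C2 : Finset V} (hC1 : C1 ⊆ X) (hC2 : C2 ⊆ Y)
    (hd : Disjoint X Y) : (X ∪ Y) \ (C1 ∪ C2) = (X \ C1) ∪ (Y \ C2) := by
  ext a
  simp only [Finset.mem_sdiff, Finset.mem_union, not_or]
  constructor
  · rintro ⟨(hX | hY), hn1, hn2⟩
    · exact Or.inl ⟨hX, hn1⟩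
    · exact Or.inr ⟨hY, hn2⟩
  · rintro (⟨hX, hn1⟩ | ⟨hY, hn2⟩)
    · exact ⟨Or.inl hX, hn1, fun h => (Finset.disjoint_left.mp hd hX) (hC2 h)⟩
    · exact ⟨Or.inr hY, fun h => (Finset.disjoint_right.mp hd hY) (hC1 h), hn2⟩

/-- Key lemma: from a cograph we can split off a 1-extendable induced subgraph with
any prescribed independence number `s ≤ α`, leaving independence number
at most `max (α - s) (s - 1)`. -/
lemma keyA (hG : IsCograph G) : ∀ n (S : Finset V), S.card = n → ∀ s, 1 ≤ s →
    s ≤ alphaF G S →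
    ∃ C, C ⊆ S ∧ oneExtF G C ∧ alphaF G C = s ∧
      alphaF G (S \ C) ≤ max (alphaF G S - s) (s - 1) := by
  intro n
  induction n using Nat.strong_induction_on with
  | _ n ih =>
    intro S hcard s hs1 hs2
    have hSne : S.Nonempty := by
      rcases Finset.eq_empty_or_nonempty S with rfl | h
      · rw [alphaF_empty] at hs2; omega
      · exact h
    by_cases hone : S.card ≤ 1
    · -- singleton
      obtain ⟨v, rfl⟩ := Finset.card_eq_one.mp (le_antisymm hone (Finset.card_pos.mpr hSne))
      have hα : alphaF G ({v} : Finset V) = 1 := alphaF_singleton v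
      have hseq : s = 1 := by omega
      subst hseq
      refine ⟨{v}, le_refl _, oneExtF_singleton v, hα, ?_⟩
      simp [alphaF_empty]
    · have h2 : 2 ≤ S.card := by omega
      rcases seinsche hG S.card S rfl h2 with
        ⟨X, Y, hXne, hYne, hdXY, hXY, hnc⟩ | ⟨X, Y, hXne, hYne, hdXY, hXY, hac⟩
      · -- UNION case
        have hXS : X ⊆ S := hXY ▸ Finset.subset_union_left
        have hYS : Y ⊆ S := hXY ▸ Finset.subset_union_right
        have hcardsum : X.card + Y.card = S.card := by
          rw [← hXY]; exact (Finset.card_union_of_disjoint hdXY).symm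
        have hXlt : X.card < n := by
          have := Finset.card_pos.mpr hYne; omega
        have hYlt : Y.card < n := by
          have := Finset.card_pos.mpr hXne; omega
        have ha1 : 1 ≤ alphaF G X := one_le_alphaF hXne
        have ha2 : 1 ≤ alphaF G Y := one_le_alphaF hYne
        have htot : alphaF G S = alphaF G X + alphaF G Y := by
          rw [← hXY]; exact alphaF_union_noCross hdXY hnc
        obtain ⟨s1, s2, hsum, hs1le, hs2le, hcost⟩ :=
          split_arith (alphaF G X) (alphaF G Y) s ha1 ha2 hs1 (htot ▸ hs2)
        have hC1 : ∃ C1, C1 ⊆ X ∧ oneExtF G C1 ∧ alphaF G C1 = s1 ∧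
            alphaF G (X \ C1) ≤ (if s1 = 0 then alphaF G X else
              max (alphaF G X - s1) (s1 - 1)) := by
          by_cases h0 : s1 = 0
          · refine ⟨∅, Finset.empty_subset _, oneExtF_empty, by simp [alphaF_empty, h0], ?_⟩
            rw [if_pos h0, Finset.sdiff_empty]
          · obtain ⟨C1, h1, h2', h3, h4⟩ := ih X.card hXlt X rfl s1 (by omega) hs1le
            exact ⟨C1, h1, h2', h3, by rw [if_neg h0]; exact h4⟩
        have hC2 : ∃ C2, C2 ⊆ Y ∧ oneExtF G C2 ∧ alphaF G C2 = s2 ∧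
            alphaF G (Y \ C2) ≤ (if s2 = 0 then alphaF G Y else
              max (alphaF G Y - s2) (s2 - 1)) := by
          by_cases h0 : s2 = 0
          · refine ⟨∅, Finset.empty_subset _, oneExtF_empty, by simp [alphaF_empty, h0], ?_⟩
            rw [if_pos h0, Finset.sdiff_empty]
          · obtain ⟨C2, h1, h2', h3, h4⟩ := ih Y.card hYlt Y rfl s2 (by omega) hs2le
            exact ⟨C2, h1, h2', h3, by rw [if_neg h0]; exact h4⟩
        obtain ⟨C1, hC1X, hC1e, hC1a, hC1r⟩ := hC1
        obtain ⟨C2, hC2Y, hC2e, hC2a, hC2r⟩ := hC2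
        have hdC : Disjoint C1 C2 := hdXY.mono hC1X hC2Y
        have hncC : NoCross G C1 C2 := noCross_mono hC1X hC2Y hnc
        have hrest : S \ (C1 ∪ C2) = (X \ C1) ∪ (Y \ C2) := by
          rw [← hXY]; exact sdiff_union_helper hC1X hC2Y hdXY
        refine ⟨C1 ∪ C2, ?_, oneExtF_union_noCross hdC hncC hC1e hC2e, ?_, ?_⟩
        · rw [← hXY]; exact Finset.union_subset_union hC1X hC2Y
        · rw [alphaF_union_noCross hdC hncC, hC1a, hC2a, hsum]
        · rw [hrest, alphaF_union_noCross
              (hdXY.mono Finset.sdiff_subset Finset.sdiff_subset)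
              (noCross_mono Finset.sdiff_subset Finset.sdiff_subset hnc), htot]
          exact le_trans (Nat.add_le_add hC1r hC2r) hcost
      · -- JOIN case
        have hXS : X ⊆ S := hXY ▸ Finset.subset_union_left
        have hYS : Y ⊆ S := hXY ▸ Finset.subset_union_right
        have hcardsum : X.card + Y.card = S.card := by
          rw [← hXY]; exact (Finset.card_union_of_disjoint hdXY).symm
        have hXlt : X.card < n := by
          have := Finset.card_pos.mpr hYne; omega
        have hYlt : Y.card < n := by
          have := Finset.card_pos.mpr hXne; omega
        have ha1 : 1 ≤ alphaF G X := one_le_alphaF hXne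
        have ha2 : 1 ≤ alphaF G Y := one_le_alphaF hYne
        have htot : alphaF G S = max (alphaF G X) (alphaF G Y) := by
          rw [← hXY]; exact alphaF_union_allCross hdXY hac
        by_cases hsX : s ≤ alphaF G X
        · by_cases hsY : s ≤ alphaF G Y
          · -- use both sides
            obtain ⟨C1, hC1X, hC1e, hC1a, hC1r⟩ := ih X.card hXlt X rfl s hs1 hsX
            obtain ⟨C2, hC2Y, hC2e, hC2a, hC2r⟩ := ih Y.card hYlt Y rfl s hs1 hsY
            have hdC : Disjoint C1 C2 := hdXY.mono hC1X hC2Y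
            have hacC : AllCross G C1 C2 := allCross_mono hC1X hC2Y hac
            have hrest : S \ (C1 ∪ C2) = (X \ C1) ∪ (Y \ C2) := by
              rw [← hXY]; exact sdiff_union_helper hC1X hC2Y hdXY
            refine ⟨C1 ∪ C2, ?_,
              oneExtF_union_allCross hdC hacC hC1e hC2e (by rw [hC1a, hC2a]), ?_, ?_⟩
            · rw [← hXY]; exact Finset.union_subset_union hC1X hC2Y
            · rw [alphaF_union_allCross hdC hacC, hC1a, hC2a, max_self]
            · rw [hrest, alphaF_union_allCross
                  (hdXY.mono Finset.sdiff_subset Finset.sdiff_subset)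
                  (allCross_mono Finset.sdiff_subset Finset.sdiff_subset hac), htot]
              omega
          · -- only X side
            obtain ⟨C1, hC1X, hC1e, hC1a, hC1r⟩ := ih X.card hXlt X rfl s hs1 hsX
            have heq : S \ C1 = (X \ C1) ∪ Y := by
              ext a
              rw [← hXY]
              simp only [Finset.mem_sdiff, Finset.mem_union]
              constructor
              · rintro ⟨(hX | hY), hn⟩
                · exact Or.inl ⟨hX, hn⟩
                · exact Or.inr hY
              · rintro (⟨hX, hn⟩ | hY)
                · exact ⟨Or.inl hX, hn⟩
                · exact ⟨Or.inr hY, fun h => (Finset.disjoint_right.mp hdXY hY) (hC1X h)⟩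
            refine ⟨C1, hC1X.trans hXS, hC1e, hC1a, ?_⟩
            have hsY' : alphaF G Y < s := lt_of_not_ge hsY
            rw [heq, alphaF_union_allCross
                (hdXY.mono Finset.sdiff_subset (le_refl _))
                (allCross_mono Finset.sdiff_subset (le_refl _) hac), htot]
            omega
        · -- only Y side
          have hsY : s ≤ alphaF G Y := by rw [htot] at hs2; omega
          obtain ⟨C2, hC2Y, hC2e, hC2a, hC2r⟩ := ih Y.card hYlt Y rfl s hs1 hsY
          have heq : S \ C2 = X ∪ (Y \ C2) := by
            ext a
            rw [← hXY]
            simp only [Finset.mem_sdiff, Finset.mem_union]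
            constructor
            · rintro ⟨(hX | hY), hn⟩
              · exact Or.inl hX
              · exact Or.inr ⟨hY, hn⟩
            · rintro (hX | ⟨hY, hn⟩)
              · exact ⟨Or.inl hX, fun h => (Finset.disjoint_left.mp hdXY hX) (hC2Y h)⟩
              · exact ⟨Or.inr hY, hn⟩
          refine ⟨C2, hC2Y.trans hYS, hC2e, hC2a, ?_⟩
          have hsX' : alphaF G X < s := lt_of_not_ge hsX
          rw [heq, alphaF_union_allCross
              (hdXY.mono (le_refl _) Finset.sdiff_subset)
              (allCross_mono (le_refl _) Finset.sdiff_subset hac), htot]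
          omega

end CGAux

namespace CGAux

variable {G : SimpleGraph V}

lemma colorize (hG : IsCograph G) : ∀ (k : ℕ) (S : Finset V), alphaF G S ≤ 2 ^ k - 1 →
    ∃ c : V → ℕ, (∀ v ∈ S, c v < k) ∧
      ∀ i : ℕ, oneExtF G (S.filter (fun v => c v = i)) := by
  intro k
  induction k with
  | zero =>
    intro S hS
    have hSe : S = ∅ := by
      rcases Finset.eq_empty_or_nonempty S with rfl | h
      · rfl
      · have := one_le_alphaF (G := G) h; simp at hS; omega
    subst hSe
    exact ⟨fun _ => 0, by simp, fun i => by rw [Finset.filter_empty]; exact oneExtF_empty⟩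
  | succ k ihk =>
    intro S hS
    rcases Finset.eq_empty_or_nonempty S with rfl | hSne
    · exact ⟨fun _ => 0, by simp, fun i => by rw [Finset.filter_empty]; exact oneExtF_empty⟩
    · have hα : 1 ≤ alphaF G S := one_le_alphaF hSne
      have hpow : 0 < 2 ^ k := pow_pos (by norm_num) k
      have hpow2 : (2:ℕ) ^ (k+1) = 2 * 2 ^ k := by rw [pow_succ]; ring
      set s := min (alphaF G S) (2 ^ k) with hsdef
      have hs1 : 1 ≤ s := le_min hα hpow
      have hs2 : s ≤ alphaF G S := min_le_left _ _
      obtain ⟨C, hCS, hCe, hCa, hCr⟩ := keyA hG S.card S rfl s hs1 hs2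
      have hrest : alphaF G (S \ C) ≤ 2 ^ k - 1 := by
        have h1 : s ≤ 2 ^ k := min_le_right _ _
        omega
      obtain ⟨c', hc'lt, hc'cls⟩ := ihk (S \ C) hrest
      refine ⟨fun v => if v ∈ C then k else c' v, ?_, ?_⟩
      · intro v hv
        by_cases h : v ∈ C
        · simp only [if_pos h]; omega
        · simp only [if_neg h]
          have := hc'lt v (Finset.mem_sdiff.mpr ⟨hv, h⟩)
          omega
      · intro i
        by_cases hik : i = k
        · subst hik
          have hfe : S.filter (fun v => (if v ∈ C then i else c' v) = i) = C := by
            ext a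
            simp only [Finset.mem_filter]
            constructor
            · rintro ⟨haS, hval⟩
              by_cases h : a ∈ C
              · exact h
              · exfalso
                rw [if_neg h] at hval
                have := hc'lt a (Finset.mem_sdiff.mpr ⟨haS, h⟩)
                omega
            · intro h
              exact ⟨hCS h, by rw [if_pos h]⟩
          rw [hfe]
          exact hCe
        · have hfe : S.filter (fun v => (if v ∈ C then k else c' v) = i) =
              (S \ C).filter (fun v => c' v = i) := by
            ext a
            simp only [Finset.mem_filter, Finset.mem_sdiff]
            constructor
            · rintro ⟨haS, hval⟩
              by_cases h : a ∈ C
              · rw [if_pos h] at hval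
                exact absurd hval.symm hik
              · rw [if_neg h] at hval
                exact ⟨⟨haS, h⟩, hval⟩
            · rintro ⟨⟨haS, h⟩, hval⟩
              exact ⟨haS, by rw [if_neg h]; exact hval⟩
          rw [hfe]
          exact hc'cls i

section bridge

variable (G) (S : Finset V) [inst : Fintype ↥(↑S : Set V)]

lemma alphaN_induce : alphaN (G.induce (↑S : Set V)) = alphaF G S := by
  apply le_antisymm
  · apply Finset.sup_le
    intro T' _
    show (if IndepF (G.induce (↑S : Set V)) T' then T'.card else 0) ≤ alphaF G S
    split_ifs with hI
    · set T := T'.map (Function.Embedding.subtype _) with hTdef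
      have hcard : T.card = T'.card := Finset.card_map _
      have hTS : T ⊆ S := by
        intro a ha
        obtain ⟨x, _, rfl⟩ := Finset.mem_map.mp ha
        exact Finset.mem_coe.mp x.2
      have hInd : IndepF G T := by
        intro u hu v hv hadj
        obtain ⟨x, hx, rfl⟩ := Finset.mem_map.mp hu
        obtain ⟨y, hy, rfl⟩ := Finset.mem_map.mp hv
        exact hI x hx y hy (by simpa [SimpleGraph.induce] using hadj)
      rw [← hcard]
      exact card_le_alphaF hTS hInd
    · exact Nat.zero_le _
  · obtain ⟨T, hTS, hI, hc⟩ := exists_alphaF G S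
    set T' : Finset ↥(↑S : Set V) := T.attach.map
      ⟨fun x => ⟨x.1, Finset.mem_coe.mpr (hTS x.2)⟩,
       fun a b hab => by apply Subtype.ext; have h := congrArg Subtype.val hab; exact h⟩ with hT'def
    have hc' : T'.card = T.card := by
      rw [hT'def, Finset.card_map, Finset.card_attach]
    have hI' : IndepF (G.induce (↑S : Set V)) T' := by
      intro u hu v hv hadj
      obtain ⟨x, _, rfl⟩ := Finset.mem_map.mp hu
      obtain ⟨y, _, rfl⟩ := Finset.mem_map.mp hv
      exact hI x.1 x.2 y.1 y.2 hadj
    have hle := Finset.le_sup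
      (f := fun U => if IndepF (G.induce (↑S : Set V)) U then U.card else 0)
      (Finset.mem_powerset.2 (Finset.subset_univ T'))
    simp only [if_pos hI'] at hle
    rw [← hc, ← hc']
    exact hle

lemma oneExt_congr {W : Type*} (G : SimpleGraph W) {s t : Set W}
    [i1 : Fintype ↥s] [i2 : Fintype ↥t] (h : s = t)
    (ht : OneExt (G.induce t)) : OneExt (G.induce s) := by
  subst h
  rw [Subsingleton.elim i1 i2]
  exact ht

lemma oneExt_induce (h : oneExtF G S) : OneExt (G.induce (↑S : Set V)) := by
  intro v'
  obtain ⟨T, hTS, hvT, hI, hc⟩ := h v'.1 (Finset.mem_coe.mp v'.2)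
  set T' : Finset ↥(↑S : Set V) := T.attach.map
    ⟨fun x => ⟨x.1, Finset.mem_coe.mpr (hTS x.2)⟩,
     fun a b hab => by apply Subtype.ext; have h := congrArg Subtype.val hab; exact h⟩ with hT'def
  refine ⟨T', ?_, ?_, ?_⟩
  · rw [hT'def, Finset.mem_map]
    exact ⟨⟨v'.1, hvT⟩, Finset.mem_attach _ _, Subtype.ext rfl⟩
  · intro u hu v hv hadj
    obtain ⟨x, _, rfl⟩ := Finset.mem_map.mp hu
    obtain ⟨y, _, rfl⟩ := Finset.mem_map.mp hv
    exact hI x.1 x.2 y.1 y.2 hadj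
  · rw [hT'def, Finset.card_map, Finset.card_attach, hc, ← alphaN_induce G S]

end bridge

end CGAux


open CGAux in
/-- For a nonempty cograph, the 1-extendable chromatic number is at most
log2 of the independence number, plus one. -/
theorem cograph_chiOneExt_le_log [Fintype V] (G : SimpleGraph V) (hG : IsCograph G)
    (hn : 1 ≤ Fintype.card V) :
    (chiOneExt G : ℝ) ≤ Real.logb 2 (alphaN G) + 1 := by
  classical
  have hNE : Nonempty V := Fintype.card_pos_iff.mp (by omega)
  have hne : (Finset.univ : Finset V).Nonempty := Finset.univ_nonempty
  have halpha : alphaN G = alphaF G Finset.univ := rfl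
  have hα1 : 1 ≤ alphaN G := halpha ▸ one_le_alphaF hne
  set k := Nat.log 2 (alphaN G) + 1 with hk
  have hlt : alphaN G < 2 ^ k := by
    have := Nat.lt_pow_succ_log_self (b := 2) (by norm_num) (alphaN G)
    simpa [hk] using this
  have hbound : alphaF G Finset.univ ≤ 2 ^ k - 1 := by
    rw [← halpha]; omega
  obtain ⟨c, hclt, hccls⟩ := colorize hG k Finset.univ hbound
  have hmem : k ∈ {k | ∃ c : V → Fin k, ∀ i : Fin k, OneExt (G.induce {v | c v = i})} := by
    refine ⟨fun v => ⟨c v, hclt v (Finset.mem_univ v)⟩, ?_⟩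
    intro i
    refine oneExt_congr G ?_ (oneExt_induce G _ (hccls i.1))
    ext v
    simp [Fin.ext_iff]
  have hchi : chiOneExt G ≤ k := Nat.sInf_le hmem
  have hlogb : (Nat.log 2 (alphaN G) : ℝ) ≤ Real.logb 2 (alphaN G) := by
    have := Real.natLog_le_logb (alphaN G) 2
    simpa using this
  calc (chiOneExt G : ℝ) ≤ (k : ℝ) := Nat.cast_le.mpr hchi
    _ = (Nat.log 2 (alphaN G) : ℝ) + 1 := by rw [hk]; push_cast; ring
    _ ≤ Real.logb 2 (alphaN G) + 1 := by linarith
end
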